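/- arXiv:0807.0403 — 2 statements merged into one kernel-verified Lean document; each statement's English description precedes it below -/
import Mathlib

section
/- Under the CFL condition λ·max|f'| + μ·max|A'| ≤ 1/2 with λ = Δt/Δx and μ = Δt/Δx², the explicit scheme U_j^{n+1} = U_j^n - λ(h(U_{j+1}^n, U_j^n) - h(U_j^n, U_{j-1}^n)) + μ(A(U_{j+1}^n) - 2A(U_j^n) + A(U_{j-1}^n)) is monotone: U_j^{n+1} is a nondecreasing function of each of U_{j-1}^n, U_j^n, U_{j+1}^n, where h is the Engquist-Osher flux of f. -/
open Real Set intervalIntegral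

theorem scheme_monotone_under_CFL (f A : ℝ → ℝ)
    (hf : ContDiff ℝ 1 f) (hA : ContDiff ℝ 1 A) (hA' : ∀ u, 0 ≤ deriv A u)
    (Δt Δx lam mu : ℝ) (hΔt : 0 < Δt) (hΔx : 0 < Δx)
    (hlam : lam = Δt / Δx) (hmu : mu = Δt / Δx ^ 2)
    (hCFL : lam * (⨆ u : Set.Icc (0:ℝ) 1, |deriv f u|) +
            mu * (⨆ u : Set.Icc (0:ℝ) 1, |deriv A u|) ≤ 1/2)
    (h : ℝ → ℝ → ℝ)
    (hh : ∀ v u, h v u = (1/2) * (f u + f v - ∫ w in u..v, |deriv f w|))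
    (G : ℝ → ℝ → ℝ → ℝ)
    (hG : ∀ a b c, G a b c = b - lam * (h c b - h b a) + mu * (A c - 2 * A b + A a)) :
    (∀ a a' b c, a ∈ Icc (0:ℝ) 1 → a' ∈ Icc (0:ℝ) 1 → b ∈ Icc (0:ℝ) 1 →
        c ∈ Icc (0:ℝ) 1 → a ≤ a' → G a b c ≤ G a' b c) ∧
    (∀ a b b' c, a ∈ Icc (0:ℝ) 1 → b ∈ Icc (0:ℝ) 1 → b' ∈ Icc (0:ℝ) 1 →
        c ∈ Icc (0:ℝ) 1 → b ≤ b' → G a b c ≤ G a b' c) ∧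
    (∀ a b c c', a ∈ Icc (0:ℝ) 1 → b ∈ Icc (0:ℝ) 1 → c ∈ Icc (0:ℝ) 1 →
        c' ∈ Icc (0:ℝ) 1 → c ≤ c' → G a b c ≤ G a b c') := by
  have hfd : Differentiable ℝ f := hf.differentiable one_ne_zero
  have hfc : Continuous (deriv f) := hf.continuous_deriv le_rfl
  have hAd : Differentiable ℝ A := hA.differentiable one_ne_zero
  have hAc : Continuous (deriv A) := hA.continuous_deriv le_rfl
  have habs : Continuous fun w => |deriv f w| := hfc.abs
  have hInt : ∀ u v : ℝ, IntervalIntegrable (fun w => |deriv f w|) MeasureTheory.volume u v :=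
    fun u v => habs.intervalIntegrable u v
  have hIntf : ∀ u v : ℝ, IntervalIntegrable (deriv f) MeasureTheory.volume u v :=
    fun u v => hfc.intervalIntegrable u v
  have hIntA : ∀ u v : ℝ, IntervalIntegrable (deriv A) MeasureTheory.volume u v :=
    fun u v => hAc.intervalIntegrable u v
  have hlam0 : 0 ≤ lam := by rw [hlam]; positivity
  have hmu0 : 0 ≤ mu := by rw [hmu]; positivity
  have hfsub : ∀ u v : ℝ, f v - f u = ∫ w in u..v, deriv f w := fun u v =>
    (intervalIntegral.integral_deriv_eq_sub (fun x _ => hfd x) (hIntf u v)).symm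
  have hAsub : ∀ u v : ℝ, A v - A u = ∫ w in u..v, deriv A w := fun u v =>
    (intervalIntegral.integral_deriv_eq_sub (fun x _ => hAd x) (hIntA u v)).symm
  -- lower/upper bounds by the integral of |f'|
  have hflow : ∀ u v : ℝ, u ≤ v → -(∫ w in u..v, |deriv f w|) ≤ f v - f u := by
    intro u v huv
    rw [hfsub u v, ← intervalIntegral.integral_neg]
    exact intervalIntegral.integral_mono huv (hInt u v).neg (hIntf u v)
      (fun w => neg_abs_le _)
  have hfhigh : ∀ u v : ℝ, u ≤ v → f v - f u ≤ ∫ w in u..v, |deriv f w| := by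
    intro u v huv
    rw [hfsub u v]
    exact intervalIntegral.integral_mono huv (hIntf u v) (hInt u v)
      (fun w => le_abs_self _)
  have hAmono : Monotone A := fun x y hxy => by
    have := hAsub x y
    have h0 : 0 ≤ ∫ w in x..y, deriv A w :=
      intervalIntegral.integral_nonneg hxy (fun w _ => hA' w)
    linarith
  -- sup bounds
  have hbddf : BddAbove (Set.range fun u : Set.Icc (0:ℝ) 1 => |deriv f u.1|) := by
    have := ((isCompact_Icc : IsCompact (Icc (0:ℝ) 1)).image habs).bddAbove
    rwa [Set.image_eq_range] at this
  have hbddA : BddAbove (Set.range fun u : Set.Icc (0:ℝ) 1 => |deriv A u.1|) := by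
    have := ((isCompact_Icc : IsCompact (Icc (0:ℝ) 1)).image hAc.abs).bddAbove
    rwa [Set.image_eq_range] at this
  have hSf0 : 0 ≤ ⨆ u : Set.Icc (0:ℝ) 1, |deriv f u.1| :=
    le_trans (abs_nonneg _) (le_ciSup hbddf ⟨0, by norm_num⟩)
  have hSA0 : 0 ≤ ⨆ u : Set.Icc (0:ℝ) 1, |deriv A u.1| :=
    le_trans (abs_nonneg _) (le_ciSup hbddA ⟨0, by norm_num⟩)
  have hkey : ∀ w ∈ Icc (0:ℝ) 1, lam * |deriv f w| + 2 * (mu * deriv A w) ≤ 1 := by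
    intro w hw
    have h1 : |deriv f w| ≤ ⨆ u : Set.Icc (0:ℝ) 1, |deriv f u.1| :=
      le_ciSup hbddf ⟨w, hw⟩
    have h2 : deriv A w ≤ ⨆ u : Set.Icc (0:ℝ) 1, |deriv A u.1| :=
      le_trans (le_abs_self _) (le_ciSup hbddA ⟨w, hw⟩)
    nlinarith [mul_le_mul_of_nonneg_left h1 hlam0, mul_le_mul_of_nonneg_left h2 hmu0]
  refine ⟨?_, ?_, ?_⟩
  · -- monotone in a
    intro a a' b c ha ha' hb hc haa'
    have hadd : (∫ w in a..a', |deriv f w|) + (∫ w in a'..b, |deriv f w|)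
        = ∫ w in a..b, |deriv f w| :=
      intervalIntegral.integral_add_adjacent_intervals (hInt a a') (hInt a' b)
    have hlow := hflow a a' haa'
    have hdh : h b a ≤ h b a' := by
      rw [hh, hh]; linarith
    have hAa : A a ≤ A a' := hAmono haa'
    rw [hG, hG]
    nlinarith [mul_le_mul_of_nonneg_left hdh hlam0, mul_le_mul_of_nonneg_left hAa hmu0]
  · -- monotone in b
    intro a b b' c ha hb hb' hc hbb'
    have hadd1 : (∫ w in a..b, |deriv f w|) + (∫ w in b..b', |deriv f w|)
        = ∫ w in a..b', |deriv f w| :=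
      intervalIntegral.integral_add_adjacent_intervals (hInt a b) (hInt b b')
    have hadd2 : (∫ w in b..b', |deriv f w|) + (∫ w in b'..c, |deriv f w|)
        = ∫ w in b..c, |deriv f w| :=
      intervalIntegral.integral_add_adjacent_intervals (hInt b b') (hInt b' c)
    have hAbb : A b' - A b = ∫ w in b..b', deriv A w := hAsub b b'
    have hnn : 0 ≤ ∫ w in b..b', (1 - lam * |deriv f w| - 2 * mu * deriv A w) := by
      refine intervalIntegral.integral_nonneg hbb' (fun w hw => ?_)
      have hwmem : w ∈ Icc (0:ℝ) 1 := ⟨le_trans hb.1 hw.1, le_trans hw.2 hb'.2⟩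
      have := hkey w hwmem
      linarith
    have hsplit : (∫ w in b..b', (1 - lam * |deriv f w| - 2 * mu * deriv A w))
        = (b' - b) - lam * (∫ w in b..b', |deriv f w|)
          - 2 * mu * (∫ w in b..b', deriv A w) := by
      have c1 : Continuous fun w : ℝ => (1:ℝ) - lam * |deriv f w| :=
        continuous_const.sub (continuous_const.mul habs)
      rw [intervalIntegral.integral_sub (g := fun w => 2 * mu * deriv A w) (c1.intervalIntegrable b b')
            ((continuous_const.mul hAc : Continuous fun w : ℝ => 2 * mu * deriv A w).intervalIntegrable b b'),
          intervalIntegral.integral_sub (g := fun w => lam * |deriv f w|)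
            ((continuous_const : Continuous fun _ : ℝ => (1:ℝ)).intervalIntegrable b b')
            ((continuous_const.mul habs : Continuous fun w : ℝ => lam * |deriv f w|).intervalIntegrable b b'),
          intervalIntegral.integral_const, intervalIntegral.integral_const_mul,
          intervalIntegral.integral_const_mul, smul_eq_mul]
      ring
    have e : (h c b' - h b' a) - (h c b - h b a) = ∫ w in b..b', |deriv f w| := by
      rw [hh, hh, hh, hh]; linarith
    have e2 : lam * ((h c b' - h b' a) - (h c b - h b a))
        = lam * ∫ w in b..b', |deriv f w| := by rw [e]
    have e3 : 2 * mu * (A b' - A b) = 2 * mu * ∫ w in b..b', deriv A w := by rw [hAbb]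
    have hfin : 0 ≤ (b' - b) - lam * (∫ w in b..b', |deriv f w|)
        - 2 * mu * (∫ w in b..b', deriv A w) := hsplit ▸ hnn
    rw [hG, hG]
    nlinarith [hfin, e2, e3]
  · -- monotone in c
    intro a b c c' ha hb hc hc' hcc'
    have hadd : (∫ w in b..c, |deriv f w|) + (∫ w in c..c', |deriv f w|)
        = ∫ w in b..c', |deriv f w| :=
      intervalIntegral.integral_add_adjacent_intervals (hInt b c) (hInt c c')
    have hhigh := hfhigh c c' hcc'
    have hdh : h c' b ≤ h c b := by
      rw [hh, hh]; linarith
    have hAc2 : A c ≤ A c' := hAmono hcc'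
    rw [hG, hG]
    nlinarith [mul_le_mul_of_nonneg_left hdh hlam0, mul_le_mul_of_nonneg_left hAc2 hmu0]
end

section
/- A monotone, conservative explicit finite-volume scheme (viewed as a map on ℓ¹(ℤ) sequences taking values in [0,1]) that is consistent (preserves constants) is ℓ¹-contractive: for any two sequences U, V, the updated sequences satisfy Σ_j |G(U)_j - G(V)_j| ≤ Σ_j |U_j - V_j|. -/
open Real Set

theorem monotone_scheme_l1_contractive
    (g : ℝ → ℝ → ℝ → ℝ) (H : ℝ → ℝ → ℝ)
    (hrange : ∀ a b c, a ∈ Icc (0:ℝ) 1 → b ∈ Icc (0:ℝ) 1 → c ∈ Icc (0:ℝ) 1 →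
        g a b c ∈ Icc (0:ℝ) 1)
    (hmono1 : ∀ a a' b c, a ∈ Icc (0:ℝ) 1 → a' ∈ Icc (0:ℝ) 1 → b ∈ Icc (0:ℝ) 1 →
        c ∈ Icc (0:ℝ) 1 → a ≤ a' → g a b c ≤ g a' b c)
    (hmono2 : ∀ a b b' c, a ∈ Icc (0:ℝ) 1 → b ∈ Icc (0:ℝ) 1 → b' ∈ Icc (0:ℝ) 1 →
        c ∈ Icc (0:ℝ) 1 → b ≤ b' → g a b c ≤ g a b' c)
    (hmono3 : ∀ a b c c', a ∈ Icc (0:ℝ) 1 → b ∈ Icc (0:ℝ) 1 → c ∈ Icc (0:ℝ) 1 →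
        c' ∈ Icc (0:ℝ) 1 → c ≤ c' → g a b c ≤ g a b c')
    (hcons : ∀ u ∈ Icc (0:ℝ) 1, g u u u = u)
    (hconserv : ∀ a b c, a ∈ Icc (0:ℝ) 1 → b ∈ Icc (0:ℝ) 1 → c ∈ Icc (0:ℝ) 1 →
        g a b c = b - (H b c - H a b))
    (U V : ℤ → ℝ) (hU : ∀ j, U j ∈ Icc (0:ℝ) 1) (hV : ∀ j, V j ∈ Icc (0:ℝ) 1)
    (hsum : Summable fun j => |U j - V j|) :
    ∑' j : ℤ, |g (U (j-1)) (U j) (U (j+1)) - g (V (j-1)) (V j) (V (j+1))| ≤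
      ∑' j : ℤ, |U j - V j| := by
  classical
  -- the sup of U and V
  set W : ℤ → ℝ := fun j => max (U j) (V j) with hWdef
  have hW : ∀ j, W j ∈ Icc (0:ℝ) 1 := fun j =>
    ⟨le_trans (hU j).1 (le_max_left _ _), max_le (hU j).2 (hV j).2⟩
  -- H is nondecreasing in its first argument
  have hH1mono : ∀ a a' b, a ∈ Icc (0:ℝ) 1 → a' ∈ Icc (0:ℝ) 1 → b ∈ Icc (0:ℝ) 1 →
      a' ≤ a → H a' b ≤ H a b := by
    intro a a' b ha ha' hb hle
    have e1 := hconserv a b b ha hb hb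
    have e2 := hconserv a' b b ha' hb hb
    have := hmono1 a' a b b ha' ha hb hb hle
    linarith
  -- H is nonincreasing in its second argument
  have hH2mono : ∀ b c c', b ∈ Icc (0:ℝ) 1 → c ∈ Icc (0:ℝ) 1 → c' ∈ Icc (0:ℝ) 1 →
      c' ≤ c → H b c ≤ H b c' := by
    intro b c c' hb hc hc' hle
    have e1 := hconserv b b c hb hb hc
    have e2 := hconserv b b c' hb hb hc'
    have := hmono3 b b c' c hb hb hc' hc hle
    linarith
  -- Lipschitz-1 bound in the first argument
  have hH1lip : ∀ a a' b, a ∈ Icc (0:ℝ) 1 → a' ∈ Icc (0:ℝ) 1 → b ∈ Icc (0:ℝ) 1 →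
      a' ≤ a → H a b - H a' b ≤ a - a' := by
    intro a a' b ha ha' hb hle
    have e1 := hconserv a' a b ha' ha hb
    have e2 := hconserv a' a' b ha' ha' hb
    have h3 := hmono2 a' a' a b ha' ha' ha hb hle
    have h4 := hH2mono a' a a' ha' ha ha' hle
    linarith
  -- Lipschitz-1 bound in the second argument
  have hH2lip : ∀ b c c', b ∈ Icc (0:ℝ) 1 → c ∈ Icc (0:ℝ) 1 → c' ∈ Icc (0:ℝ) 1 →
      c' ≤ c → H b c' - H b c ≤ c - c' := by
    intro b c c' hb hc hc' hle
    have e1 := hconserv b c c' hb hc hc'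
    have e2 := hconserv b c' c' hb hc' hc'
    have h3 := hmono2 b c' c c' hb hc' hc hc' hle
    have h4 := hH1mono c c' c' hc hc' hc' hle
    linarith
  -- abbreviations
  set GU : ℤ → ℝ := fun j => g (U (j-1)) (U j) (U (j+1)) with hGUdef
  set GV : ℤ → ℝ := fun j => g (V (j-1)) (V j) (V (j+1)) with hGVdef
  set GW : ℤ → ℝ := fun j => g (W (j-1)) (W j) (W (j+1)) with hGWdef
  have hUW : ∀ j, U j ≤ W j := fun j => le_max_left _ _
  have hVW : ∀ j, V j ≤ W j := fun j => le_max_right _ _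
  have hGUW : ∀ j, GU j ≤ GW j := by
    intro j
    calc GU j = g (U (j-1)) (U j) (U (j+1)) := rfl
      _ ≤ g (W (j-1)) (U j) (U (j+1)) :=
          hmono1 _ _ _ _ (hU _) (hW _) (hU _) (hU _) (hUW _)
      _ ≤ g (W (j-1)) (W j) (U (j+1)) :=
          hmono2 _ _ _ _ (hW _) (hU _) (hW _) (hU _) (hUW _)
      _ ≤ g (W (j-1)) (W j) (W (j+1)) :=
          hmono3 _ _ _ _ (hW _) (hW _) (hU _) (hW _) (hUW _)
  have hGVW : ∀ j, GV j ≤ GW j := by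
    intro j
    calc GV j = g (V (j-1)) (V j) (V (j+1)) := rfl
      _ ≤ g (W (j-1)) (V j) (V (j+1)) :=
          hmono1 _ _ _ _ (hV _) (hW _) (hV _) (hV _) (hVW _)
      _ ≤ g (W (j-1)) (W j) (V (j+1)) :=
          hmono2 _ _ _ _ (hW _) (hV _) (hW _) (hV _) (hVW _)
      _ ≤ g (W (j-1)) (W j) (W (j+1)) :=
          hmono3 _ _ _ _ (hW _) (hW _) (hV _) (hW _) (hVW _)
  -- summability of W - U and W - V
  have hWU_nonneg : ∀ j, 0 ≤ W j - U j := fun j => by linarith [hUW j]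
  have hWV_nonneg : ∀ j, 0 ≤ W j - V j := fun j => by linarith [hVW j]
  have hWU_le : ∀ j, W j - U j ≤ |U j - V j| := by
    intro j
    rcases le_total (U j) (V j) with h | h
    · have hw : W j = V j := max_eq_right h
      rw [hw]
      have := le_abs_self (V j - U j)
      rw [abs_sub_comm] at this
      linarith
    · have hw : W j = U j := max_eq_left h
      rw [hw]
      have := abs_nonneg (U j - V j)
      linarith
  have hWV_le : ∀ j, W j - V j ≤ |U j - V j| := by
    intro j
    rcases le_total (U j) (V j) with h | h
    · have hw : W j = V j := max_eq_right h
      rw [hw]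
      have := abs_nonneg (U j - V j)
      linarith
    · have hw : W j = U j := max_eq_left h
      rw [hw]
      have := le_abs_self (U j - V j)
      linarith
  have hsumWU : Summable (fun j => W j - U j) :=
    Summable.of_nonneg_of_le hWU_nonneg hWU_le hsum
  have hsumWV : Summable (fun j => W j - V j) :=
    Summable.of_nonneg_of_le hWV_nonneg hWV_le hsum
  -- the flux differences
  set D : ℤ → ℝ := fun j => H (W j) (W (j+1)) - H (U j) (U (j+1)) with hDdef
  have hDle : ∀ j, D j ≤ W j - U j := by
    intro j
    have h1 := hH1lip (W j) (U j) (W (j+1)) (hW _) (hU _) (hW _) (hUW _)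
    have h2 := hH2mono (U j) (W (j+1)) (U (j+1)) (hU _) (hW _) (hU _) (hUW _)
    simp only [hDdef]
    linarith
  have hDge : ∀ j, -(W (j+1) - U (j+1)) ≤ D j := by
    intro j
    have h1 := hH1mono (W j) (U j) (W (j+1)) (hW _) (hU _) (hW _) (hUW _)
    have h2 := hH2lip (U j) (W (j+1)) (U (j+1)) (hU _) (hW _) (hU _) (hUW _)
    simp only [hDdef]
    linarith
  have hsumWU' : Summable (fun j => W (j+1) - U (j+1)) := by
    have := (Equiv.addRight (1:ℤ)).summable_iff.mpr hsumWU
    exact this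
  have hDabs : ∀ j, |D j| ≤ (W j - U j) + (W (j+1) - U (j+1)) := by
    intro j
    rw [abs_le]
    constructor
    · have := hDge j; have := hWU_nonneg j; linarith
    · have := hDle j; have := hWU_nonneg (j+1); linarith
  have hsumDabs : Summable (fun j => |D j|) :=
    Summable.of_nonneg_of_le (fun j => abs_nonneg _) hDabs (hsumWU.add hsumWU')
  have hsumD : Summable D := hsumDabs.of_abs
  have hsumDshift : Summable (fun j => D (j - 1)) := by
    have := (Equiv.subRight (1:ℤ)).summable_iff.mpr hsumD
    exact this
  have htsumshift : ∑' j : ℤ, D (j - 1) = ∑' j : ℤ, D j := by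
    have := (Equiv.subRight (1:ℤ)).tsum_eq D
    simpa using this
  -- key conservation identity
  have key : ∀ j, GW j - GU j = (W j - U j) - D j + D (j - 1) := by
    intro j
    have h1 := hconserv (U (j-1)) (U j) (U (j+1)) (hU _) (hU _) (hU _)
    have h2 := hconserv (W (j-1)) (W j) (W (j+1)) (hW _) (hW _) (hW _)
    have hj : (j : ℤ) - 1 + 1 = j := by ring
    simp only [hGUdef, hGWdef, hDdef, hj]
    linarith
  have key' : ∀ j, GW j - GV j = (W j - V j) -
      (H (W j) (W (j+1)) - H (V j) (V (j+1))) +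
      (H (W (j-1)) (W (j-1+1)) - H (V (j-1)) (V (j-1+1))) := by
    intro j
    have h1 := hconserv (V (j-1)) (V j) (V (j+1)) (hV _) (hV _) (hV _)
    have h2 := hconserv (W (j-1)) (W j) (W (j+1)) (hW _) (hW _) (hW _)
    have hj : (j : ℤ) - 1 + 1 = j := by ring
    simp only [hGVdef, hGWdef, hj]
    linarith
  -- telescoping sums
  have hsumGWU : Summable (fun j => GW j - GU j) := by
    have : (fun j => GW j - GU j) = fun j => (W j - U j) - D j + D (j - 1) :=
      funext key
    rw [this]
    exact (hsumWU.sub hsumD).add hsumDshift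
  have htsumGWU : ∑' j : ℤ, (GW j - GU j) = ∑' j : ℤ, (W j - U j) := by
    have : (fun j => GW j - GU j) = fun j => (W j - U j) - D j + D (j - 1) :=
      funext key
    rw [this, Summable.tsum_add (hsumWU.sub hsumD) hsumDshift, Summable.tsum_sub hsumWU hsumD,
      htsumshift]
    ring
  -- same for V
  set E : ℤ → ℝ := fun j => H (W j) (W (j+1)) - H (V j) (V (j+1)) with hEdef
  have hEle : ∀ j, E j ≤ W j - V j := by
    intro j
    have h1 := hH1lip (W j) (V j) (W (j+1)) (hW _) (hV _) (hW _) (hVW _)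
    have h2 := hH2mono (V j) (W (j+1)) (V (j+1)) (hV _) (hW _) (hV _) (hVW _)
    simp only [hEdef]
    linarith
  have hEge : ∀ j, -(W (j+1) - V (j+1)) ≤ E j := by
    intro j
    have h1 := hH1mono (W j) (V j) (W (j+1)) (hW _) (hV _) (hW _) (hVW _)
    have h2 := hH2lip (V j) (W (j+1)) (V (j+1)) (hV _) (hW _) (hV _) (hVW _)
    simp only [hEdef]
    linarith
  have hsumWV' : Summable (fun j => W (j+1) - V (j+1)) := by
    have := (Equiv.addRight (1:ℤ)).summable_iff.mpr hsumWV
    exact this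
  have hEabs : ∀ j, |E j| ≤ (W j - V j) + (W (j+1) - V (j+1)) := by
    intro j
    rw [abs_le]
    constructor
    · have := hEge j; have := hWV_nonneg j; linarith
    · have := hEle j; have := hWV_nonneg (j+1); linarith
  have hsumE : Summable E :=
    (Summable.of_nonneg_of_le (fun j => abs_nonneg _) hEabs
      (hsumWV.add hsumWV')).of_abs
  have hsumEshift : Summable (fun j => E (j - 1)) := by
    have := (Equiv.subRight (1:ℤ)).summable_iff.mpr hsumE
    exact this
  have htsumEshift : ∑' j : ℤ, E (j - 1) = ∑' j : ℤ, E j := by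
    have := (Equiv.subRight (1:ℤ)).tsum_eq E
    simpa using this
  have keyE : ∀ j, GW j - GV j = (W j - V j) - E j + E (j - 1) := by
    intro j
    have h := key' j
    have hj : (j : ℤ) - 1 + 1 = j := by ring
    rw [hj] at h
    simp only [hEdef, hj]
    linarith
  have hsumGWV : Summable (fun j => GW j - GV j) := by
    have : (fun j => GW j - GV j) = fun j => (W j - V j) - E j + E (j - 1) :=
      funext keyE
    rw [this]
    exact (hsumWV.sub hsumE).add hsumEshift
  have htsumGWV : ∑' j : ℤ, (GW j - GV j) = ∑' j : ℤ, (W j - V j) := by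
    have : (fun j => GW j - GV j) = fun j => (W j - V j) - E j + E (j - 1) :=
      funext keyE
    rw [this, Summable.tsum_add (hsumWV.sub hsumE) hsumEshift, Summable.tsum_sub hsumWV hsumE,
      htsumEshift]
    ring
  -- pointwise bound
  have hpt : ∀ j, |GU j - GV j| ≤ (GW j - GU j) + (GW j - GV j) := by
    intro j
    rw [abs_le]
    constructor
    · have := hGUW j; have := hGVW j; linarith
    · have := hGUW j; have := hGVW j; linarith
  have hsumRHS : Summable (fun j => (GW j - GU j) + (GW j - GV j)) :=
    hsumGWU.add hsumGWV
  have hsumLHS : Summable (fun j => |GU j - GV j|) :=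
    Summable.of_nonneg_of_le (fun j => abs_nonneg _) hpt hsumRHS
  have hmaxid : ∀ j, (W j - U j) + (W j - V j) = |U j - V j| := by
    intro j
    rcases le_total (U j) (V j) with h | h
    · have hw : W j = V j := max_eq_right h
      rw [hw, abs_of_nonpos (by linarith : U j - V j ≤ 0)]
      ring
    · have hw : W j = U j := max_eq_left h
      rw [hw, abs_of_nonneg (by linarith : (0:ℝ) ≤ U j - V j)]
      ring
  calc ∑' j : ℤ, |GU j - GV j|
      ≤ ∑' j : ℤ, ((GW j - GU j) + (GW j - GV j)) :=
        Summable.tsum_le_tsum hpt hsumLHS hsumRHS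
    _ = ∑' j : ℤ, (GW j - GU j) + ∑' j : ℤ, (GW j - GV j) :=
        Summable.tsum_add hsumGWU hsumGWV
    _ = ∑' j : ℤ, (W j - U j) + ∑' j : ℤ, (W j - V j) := by
        rw [htsumGWU, htsumGWV]
    _ = ∑' j : ℤ, ((W j - U j) + (W j - V j)) := (Summable.tsum_add hsumWU hsumWV).symm
    _ = ∑' j : ℤ, |U j - V j| := by
        exact tsum_congr hmaxid
end
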